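/- arXiv:2307.05494 — 2 statements merged into one kernel-verified Lean document; each statement's English description precedes it below -/
import Mathlib

section
/- Let f : α → ℝ and c, w : Fin T → α → (N → ℝ) where N is a finite nonempty index set, T ≥ 1, and let H_c, H_w : N → ℝ → ℝ be monotone increasing convex functions. Define the original objective F(x) = (1/T)*∑ t, f(x t) + μc * max_i H_c i ((1/T)*∑ t, c t (x t) i) + μw * max_i H_w i ((1/T)*∑ t, w t (x t) i) for x : Fin T → α, with μc, μw ≥ 0. Define the transformed objective G(x, zc, zw) = (1/T)*∑ t, f(x t) + (μc/T)*∑ t, max_i H_c i (zc t i) + (μw/T)*∑ t, max_i H_w i (zw t i) over triples satisfying (1/T)*∑ t, zc t i ≥ (1/T)*∑ t, c t (x t) i and (1/T)*∑ t, zw t i ≥ (1/T)*∑ t, w t (x t) i for all i. Then the infimum of F over all x equals the infimum of G over all feasible (x, zc, zw). -/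
lemma key_ineq {N : Type*} [Fintype N] [Nonempty N] (T : ℕ) (hT : 1 ≤ T)
    (H : N → ℝ → ℝ) (hH : ∀ i, Monotone (H i) ∧ ConvexOn ℝ Set.univ (H i))
    (μ : ℝ) (hμ : 0 ≤ μ) (a z : Fin T → N → ℝ)
    (hcon : ∀ i, (1/(T:ℝ)) * ∑ t, a t i ≤ (1/(T:ℝ)) * ∑ t, z t i) :
    μ * Finset.univ.sup' Finset.univ_nonempty (fun i => H i ((1/(T:ℝ)) * ∑ t, a t i))
      ≤ (μ / (T:ℝ)) * ∑ t, Finset.univ.sup' Finset.univ_nonempty (fun i => H i (z t i)) := by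
  have hT0 : (0:ℝ) < T := by positivity
  have hw1 : ∑ _t : Fin T, (1/(T:ℝ)) = 1 := by
    simp [Finset.sum_const]
    field_simp
  have hkey : Finset.univ.sup' Finset.univ_nonempty
      (fun i => H i ((1/(T:ℝ)) * ∑ t, a t i))
      ≤ (1/(T:ℝ)) * ∑ t, Finset.univ.sup' Finset.univ_nonempty (fun i => H i (z t i)) := by
    apply Finset.sup'_le
    intro i _
    have h1 : H i ((1/(T:ℝ)) * ∑ t, a t i) ≤ H i ((1/(T:ℝ)) * ∑ t, z t i) :=
      (hH i).1 (hcon i)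
    have h2 : H i ((1/(T:ℝ)) * ∑ t, z t i)
        ≤ ∑ t, (1/(T:ℝ)) * H i (z t i) := by
      have := (hH i).2.map_sum_le (t := Finset.univ) (w := fun _ => 1/(T:ℝ))
        (p := fun t => z t i) (fun _ _ => by positivity) hw1 (fun _ _ => trivial)
      simpa [Finset.mul_sum, smul_eq_mul] using this
    have h3 : ∑ t, (1/(T:ℝ)) * H i (z t i)
        ≤ ∑ t, (1/(T:ℝ)) * Finset.univ.sup' Finset.univ_nonempty (fun j => H j (z t j)) := by
      apply Finset.sum_le_sum
      intro t _
      exact mul_le_mul_of_nonneg_left (Finset.le_sup' (fun j => H j (z t j)) (Finset.mem_univ i)) (by positivity)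
    calc _ ≤ _ := h1
      _ ≤ _ := h2
      _ ≤ _ := h3
      _ = _ := by rw [Finset.mul_sum]
  calc μ * _ ≤ μ * ((1/(T:ℝ)) * ∑ t, Finset.univ.sup' Finset.univ_nonempty (fun i => H i (z t i))) :=
        mul_le_mul_of_nonneg_left hkey hμ
    _ = _ := by ring

theorem transformed_problem_equivalence {α N : Type*} [Nonempty α] [Fintype N] [Nonempty N]
    (T : ℕ) (hT : 1 ≤ T) (f : α → ℝ) (c w : Fin T → α → N → ℝ)
    (Hc Hw : N → ℝ → ℝ)
    (hHc : ∀ i, Monotone (Hc i) ∧ ConvexOn ℝ Set.univ (Hc i))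
    (hHw : ∀ i, Monotone (Hw i) ∧ ConvexOn ℝ Set.univ (Hw i))
    (μc μw : ℝ) (hμc : 0 ≤ μc) (hμw : 0 ≤ μw) :
    sInf (Set.range fun x : Fin T → α =>
      (1 / (T : ℝ)) * ∑ t, f (x t)
      + μc * Finset.univ.sup' Finset.univ_nonempty
          (fun i => Hc i ((1 / (T : ℝ)) * ∑ t, c t (x t) i))
      + μw * Finset.univ.sup' Finset.univ_nonempty
          (fun i => Hw i ((1 / (T : ℝ)) * ∑ t, w t (x t) i)))
    = sInf { v : ℝ | ∃ (x : Fin T → α) (zc zw : Fin T → N → ℝ),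
        (∀ i, (1 / (T : ℝ)) * ∑ t, c t (x t) i ≤ (1 / (T : ℝ)) * ∑ t, zc t i) ∧
        (∀ i, (1 / (T : ℝ)) * ∑ t, w t (x t) i ≤ (1 / (T : ℝ)) * ∑ t, zw t i) ∧
        v = (1 / (T : ℝ)) * ∑ t, f (x t)
          + (μc / (T : ℝ)) * ∑ t, Finset.univ.sup' Finset.univ_nonempty
              (fun i => Hc i (zc t i))
          + (μw / (T : ℝ)) * ∑ t, Finset.univ.sup' Finset.univ_nonempty
              (fun i => Hw i (zw t i)) } := by
  have hT0 : (0:ℝ) < T := by positivity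
  set F : (Fin T → α) → ℝ := fun x =>
      (1 / (T : ℝ)) * ∑ t, f (x t)
      + μc * Finset.univ.sup' Finset.univ_nonempty
          (fun i => Hc i ((1 / (T : ℝ)) * ∑ t, c t (x t) i))
      + μw * Finset.univ.sup' Finset.univ_nonempty
          (fun i => Hw i ((1 / (T : ℝ)) * ∑ t, w t (x t) i)) with hF
  set S₂ : Set ℝ := { v : ℝ | ∃ (x : Fin T → α) (zc zw : Fin T → N → ℝ),
        (∀ i, (1 / (T : ℝ)) * ∑ t, c t (x t) i ≤ (1 / (T : ℝ)) * ∑ t, zc t i) ∧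
        (∀ i, (1 / (T : ℝ)) * ∑ t, w t (x t) i ≤ (1 / (T : ℝ)) * ∑ t, zw t i) ∧
        v = (1 / (T : ℝ)) * ∑ t, f (x t)
          + (μc / (T : ℝ)) * ∑ t, Finset.univ.sup' Finset.univ_nonempty
              (fun i => Hc i (zc t i))
          + (μw / (T : ℝ)) * ∑ t, Finset.univ.sup' Finset.univ_nonempty
              (fun i => Hw i (zw t i)) } with hS₂
  have hsub : Set.range F ⊆ S₂ := by
    rintro v ⟨x, rfl⟩
    refine ⟨x, fun t i => (1/(T:ℝ)) * ∑ s, c s (x s) i,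
      fun t i => (1/(T:ℝ)) * ∑ s, w s (x s) i, ?_, ?_, ?_⟩
    · intro i; rw [Finset.sum_const, Finset.card_univ, Fintype.card_fin, nsmul_eq_mul]
      rw [← mul_assoc]; field_simp; exact le_rfl
    · intro i; rw [Finset.sum_const, Finset.card_univ, Fintype.card_fin, nsmul_eq_mul]
      rw [← mul_assoc]; field_simp; exact le_rfl
    · simp only [hF]
      rw [Finset.sum_const, Finset.sum_const, Finset.card_univ, Fintype.card_fin,
        nsmul_eq_mul, nsmul_eq_mul]
      field_simp
  have hdom : ∀ v ∈ S₂, ∃ u ∈ Set.range F, u ≤ v := by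
    rintro v ⟨x, zc, zw, hc1, hc2, rfl⟩
    refine ⟨F x, ⟨x, rfl⟩, ?_⟩
    have h1 := key_ineq T hT Hc hHc μc hμc (fun t i => c t (x t) i) zc hc1
    have h2 := key_ineq T hT Hw hHw μw hμw (fun t i => w t (x t) i) zw hc2
    simp only [hF]
    linarith
  have hne : (Set.range F).Nonempty := Set.range_nonempty F
  by_cases hb : BddBelow (Set.range F)
  · obtain ⟨b, hbb⟩ := hb
    have hb2 : BddBelow S₂ := by
      refine ⟨b, fun v hv => ?_⟩
      obtain ⟨u, hu, hle⟩ := hdom v hv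
      exact le_trans (hbb hu) hle
    refine le_antisymm ?_ (csInf_le_csInf hb2 hne hsub)
    refine le_csInf (hne.mono hsub) fun v hv => ?_
    obtain ⟨u, hu, hle⟩ := hdom v hv
    exact le_trans (csInf_le ⟨b, hbb⟩ hu) hle
  · rw [Real.sInf_of_not_bddBelow hb,
      Real.sInf_of_not_bddBelow (fun h => hb (h.mono hsub))]
end

section
/- Let κ : ℕ → (Fin n → ℝ) evolve via κ (t+1) = componentwise-positive-part of (κ t - η • d t) with η > 0 and ‖d t‖∞ ≤ z̄ for all t. Then for any vector v with ‖v‖∞ ≤ z̄ and any t ≥ 1, |⟨κ t - κ 1, v⟩| ≤ (t-1) * n * η * z̄². -/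
theorem dual_inner_product_drift (n : ℕ) (η zbar : ℝ) (hη : 0 < η)
    (κ : ℕ → Fin n → ℝ) (d : ℕ → Fin n → ℝ)
    (hupd : ∀ (t : ℕ) (j : Fin n), κ (t + 1) j = max (κ t j - η * d t j) 0)
    (hd : ∀ t j, |d t j| ≤ zbar)
    (v : Fin n → ℝ) (hv : ∀ j, |v j| ≤ zbar) :
    ∀ t : ℕ, 1 ≤ t →
      |∑ j, (κ t j - κ 1 j) * v j| ≤ ((t : ℝ) - 1) * n * η * zbar ^ 2 := by
  intro t ht
  rcases Nat.eq_zero_or_pos n with hn | hn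
  · subst hn
    simp
  · have hz : 0 ≤ zbar := le_trans (abs_nonneg _) (hd 0 ⟨0, hn⟩)
    have ht1 : (1 : ℝ) ≤ (t : ℝ) := by exact_mod_cast ht
    have key : ∀ s : ℕ, 1 ≤ s → ∀ j, |κ s j - κ 1 j| ≤ ((s : ℝ) - 1) * η * zbar := by
      intro s hs
      induction s, hs using Nat.le_induction with
      | base => intro j; simp
      | succ m hm ih =>
        intro j
        have hκ : 0 ≤ κ m j := by
          obtain ⟨k, rfl⟩ := Nat.exists_eq_add_of_le hm
          rw [Nat.add_comm, hupd]
          exact le_max_right _ _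
        have hstep : |κ (m + 1) j - κ m j| ≤ η * zbar := by
          have hdb : |η * d m j| ≤ η * zbar := by
            rw [abs_mul, abs_of_pos hη]
            exact mul_le_mul_of_nonneg_left (hd m j) hη.le
          rw [hupd]
          rcases le_or_gt 0 (κ m j - η * d m j) with h | h
          · rw [max_eq_left h]
            simpa using (abs_neg (η * d m j) ▸ hdb : |-(η * d m j)| ≤ η * zbar)
          · rw [max_eq_right h.le, zero_sub, abs_neg, abs_of_nonneg hκ]
            have h2 : κ m j < η * d m j := by linarith
            exact le_trans h2.le (le_trans (le_abs_self _) hdb)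
        have hm1 : (1 : ℝ) ≤ (m : ℝ) := by exact_mod_cast hm
        calc |κ (m + 1) j - κ 1 j|
            ≤ |κ (m + 1) j - κ m j| + |κ m j - κ 1 j| := abs_sub_le _ _ _
          _ ≤ η * zbar + ((m : ℝ) - 1) * η * zbar := add_le_add hstep (ih j)
          _ = ((↑(m + 1) : ℝ) - 1) * η * zbar := by push_cast; ring
    have hsum : |∑ j, (κ t j - κ 1 j) * v j| ≤ ∑ j : Fin n, ((t : ℝ) - 1) * η * zbar * zbar := by
      refine le_trans (Finset.abs_sum_le_sum_abs _ _) (Finset.sum_le_sum fun j _ => ?_)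
      rw [abs_mul]
      exact mul_le_mul (key t ht j) (hv j) (abs_nonneg _)
        (mul_nonneg (mul_nonneg (by linarith) hη.le) hz)
    calc |∑ j, (κ t j - κ 1 j) * v j|
        ≤ ∑ j : Fin n, ((t : ℝ) - 1) * η * zbar * zbar := hsum
      _ = ((t : ℝ) - 1) * n * η * zbar ^ 2 := by
          rw [Finset.sum_const, Finset.card_univ, Fintype.card_fin]
          ring
end
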